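/- For any prime p > 3, the rational number ∑_{k=1}^{p-1} H_k/(k·2^k) is congruent to 0 modulo p. -/

import Mathlib

set_option linter.unusedSectionVars false

open Finset

/-- `x ≡ y (mod p^m)` for rational numbers: `x - y = p^m * r` with `p ∤ den r`. -/
def ratCong (p m : ℕ) (x y : ℚ) : Prop :=
  ∃ r : ℚ, x - y = (p : ℚ) ^ m * r ∧ ¬ (p ∣ r.den)

section Aux

variable {p : ℕ} [hp : Fact p.Prime]

lemma pn_nat_one {n : ℕ} (h : ¬ p ∣ n) : padicNorm p (n : ℚ) = 1 :=
  (padicNorm.nat_eq_one_iff n).2 h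

lemma pn_inv_nat_le {n : ℕ} (h : ¬ p ∣ n) : padicNorm p ((n : ℚ))⁻¹ ≤ 1 := by
  rw [← one_div, padicNorm.div, padicNorm.one, pn_nat_one h]
  norm_num

lemma not_dvd_of_lt {n : ℕ} (h0 : n ≠ 0) (h : n < p) : ¬ p ∣ n :=
  fun hd => absurd (Nat.le_of_dvd (by omega) hd) (by omega)

lemma pn_harmonic {k : ℕ} (h : k < p) : padicNorm p (harmonic k) ≤ 1 := by
  induction k with
  | zero => simp [harmonic]
  | succ n ih =>
    rw [harmonic_succ]
    refine le_trans padicNorm.nonarchimedean (max_le (ih (by omega)) ?_)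
    simpa [one_div] using pn_inv_nat_le (p := p) (not_dvd_of_lt (by omega) h)

/-- the sign-adjusted binomial coefficient -/
noncomputable def cc (p k : ℕ) : ℚ := (-1)^k * ((p-1).choose k : ℚ)

lemma cc_rec {k : ℕ} (hk : k + 1 ≤ p - 1) :
    ((k:ℚ)+1) * cc p (k+1) = cc p k * (((k:ℚ)+1) - p) := by
  have h1 : (p-1).choose (k+1) * (k+1) = (p-1).choose k * ((p-1) - k) :=
    Nat.choose_succ_right_eq _ _
  have h2 : ((((p-1) - k : ℕ)) : ℚ) = (p:ℚ) - 1 - k := by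
    have hp1 : 1 ≤ p := hp.out.one_lt.le
    have : k ≤ p - 1 := by omega
    push_cast [Nat.cast_sub this, Nat.cast_sub hp1]
    ring
  have h1q : ((p-1).choose (k+1) : ℚ) * ((k:ℚ)+1) = ((p-1).choose k : ℚ) * ((p:ℚ) - 1 - k) := by
    rw [← h2]
    exact_mod_cast congrArg (Nat.cast : ℕ → ℚ) h1
  unfold cc
  rw [pow_succ]
  linear_combination (-(-1:ℚ)^k) * h1q

lemma cc_cong {k : ℕ} (hk : k ≤ p - 1) :
    padicNorm p ((p:ℚ) * harmonic k - 1 + cc p k) ≤ ((p:ℚ))⁻¹^2 := by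
  induction k with
  | zero => simp [harmonic, cc]
  | succ n ih =>
    have hn : n ≤ p - 1 := by omega
    have hlt : n + 1 < p := by have := hp.out.two_le; omega
    have hnd : ¬ p ∣ (n+1) := not_dvd_of_lt (by omega) hlt
    have hn1 : ((n:ℚ)+1) ≠ 0 := by positivity
    have hrec := cc_rec (p := p) (k := n) hk
    have hid : (p:ℚ) * harmonic (n+1) - 1 + cc p (n+1) =
        ((p:ℚ) * harmonic n - 1 + cc p n)
        + ((p:ℚ) * ((n:ℚ)+1)⁻¹) * ((p:ℚ) * harmonic n - ((p:ℚ) * harmonic n - 1 + cc p n)) := by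
      rw [harmonic_succ]
      have hcc : cc p (n+1) = cc p n * (((n:ℚ)+1) - p) / ((n:ℚ)+1) := by
        field_simp at hrec ⊢
        linarith [hrec]
      rw [hcc]
      push_cast
      field_simp
      ring
    rw [hid]
    set u : ℚ := ((p:ℚ))⁻¹ with hu
    have hu0 : 0 ≤ u := by positivity
    have hu1 : u ≤ 1 := by
      rw [hu]
      exact inv_le_one_of_one_le₀ (by exact_mod_cast hp.out.one_lt.le)
    have hnormp : padicNorm p (p:ℚ) = u := padicNorm.padicNorm_p_of_prime
    have hD := ih hn
    have hpH : padicNorm p ((p:ℚ) * harmonic n) ≤ u := by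
      rw [padicNorm.mul, hnormp]
      calc u * padicNorm p (harmonic n) ≤ u * 1 :=
            mul_le_mul_of_nonneg_left (pn_harmonic (by omega)) hu0
        _ = u := mul_one u
    have h2 : padicNorm p ((p:ℚ) * ((n:ℚ)+1)⁻¹) ≤ u := by
      rw [padicNorm.mul, hnormp]
      have : padicNorm p (((n:ℚ)+1)⁻¹) ≤ 1 := by
        simpa using pn_inv_nat_le (p := p) hnd
      calc u * padicNorm p (((n:ℚ)+1)⁻¹) ≤ u * 1 := mul_le_mul_of_nonneg_left this hu0
        _ = u := mul_one u
    have h3 : padicNorm p ((p:ℚ) * harmonic n - ((p:ℚ) * harmonic n - 1 + cc p n)) ≤ u :=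
      le_trans padicNorm.sub (max_le hpH (le_trans hD (by nlinarith)))
    refine le_trans padicNorm.nonarchimedean (max_le hD ?_)
    rw [padicNorm.mul, sq]
    exact mul_le_mul h2 h3 (padicNorm.nonneg _) hu0


lemma sum_Icc_one (m : ℕ) (f : ℕ → ℚ) : ∑ k ∈ Icc 1 m, f k = ∑ i ∈ range m, f (i+1) := by
  rw [← Finset.Ico_add_one_right_eq_Icc, Finset.sum_Ico_eq_sum_range]
  simp [add_comm]

lemma binom_ident (n : ℕ) (x : ℚ) :
    ∑ i ∈ range n, (n.choose (i+1) : ℚ) * x^(i+1) / ((i:ℚ)+1)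
      = ∑ i ∈ range n, ((1+x)^(i+1) - 1) / ((i:ℚ)+1) := by
  induction n with
  | zero => simp
  | succ n ih =>
    have hsplit : ∀ i, ((n+1).choose (i+1) : ℚ) * x^(i+1) / ((i:ℚ)+1)
        = (n.choose i : ℚ) * x^(i+1) / ((i:ℚ)+1) + (n.choose (i+1) : ℚ) * x^(i+1) / ((i:ℚ)+1) := by
      intro i
      rw [Nat.choose_succ_succ]
      push_cast
      ring
    rw [Finset.sum_congr rfl (fun i _ => hsplit i), Finset.sum_add_distrib]
    -- second sum: drop last term (choose n (n+1) = 0) and use ih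
    have h2 : ∑ i ∈ range (n+1), (n.choose (i+1) : ℚ) * x^(i+1) / ((i:ℚ)+1)
        = ∑ i ∈ range n, ((1+x)^(i+1) - 1) / ((i:ℚ)+1) := by
      rw [Finset.sum_range_succ, Nat.choose_succ_self]
      simpa using ih
    -- first sum = ((1+x)^(n+1) - 1)/(n+1)
    have h1 : ∑ i ∈ range (n+1), (n.choose i : ℚ) * x^(i+1) / ((i:ℚ)+1)
        = ((1+x)^(n+1) - 1) / ((n:ℚ)+1) := by
      have key : ∀ i, (n.choose i : ℚ) * x^(i+1) / ((i:ℚ)+1)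
          = (((n+1).choose (i+1) : ℚ) * x^(i+1)) / ((n:ℚ)+1) := by
        intro i
        have h := Nat.add_one_mul_choose_eq n i
        have hq : ((n:ℚ)+1) * (n.choose i : ℚ) = ((n+1).choose (i+1) : ℚ) * ((i:ℚ)+1) := by
          exact_mod_cast congrArg (Nat.cast : ℕ → ℚ) h
        have hi1 : ((i:ℚ)+1) ≠ 0 := by positivity
        have hn1 : ((n:ℚ)+1) ≠ 0 := by positivity
        field_simp
        linear_combination x^(i+1) * hq
      rw [Finset.sum_congr rfl (fun i _ => key i), ← Finset.sum_div]
      congr 1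
      have hb : (1+x)^(n+1) = ∑ k ∈ range (n+2), x^k * ((n+1).choose k : ℚ) := by
        have := add_pow x 1 (n+1)
        simpa [add_comm x 1] using this
      have hsum : ∑ k ∈ range (n+2), x^k * ((n+1).choose k : ℚ)
          = (∑ k ∈ range n, x^(k+1+1) * ((n+1).choose (k+1+1) : ℚ)) + x * ((n:ℚ)+1) + 1 := by
        rw [Finset.sum_range_succ', Finset.sum_range_succ']
        simp [Nat.choose_one_right]
      rw [hb, hsum, Finset.sum_range_succ' (fun i => (((n+1).choose (i+1)):ℚ) * x^(i+1)) n]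
      rw [Finset.sum_congr rfl (fun i _ => mul_comm (((n+1).choose (i+1+1):ℚ)) (x^(i+1+1)))]
      simp [Nat.choose_one_right]
      ring
    rw [h1, h2, Finset.sum_range_succ]
    ring


lemma sum_Icc_one' (m : ℕ) (f : ℕ → ℚ) : ∑ k ∈ Icc 1 m, f k = ∑ i ∈ range m, f (i+1) := by
  rw [← Finset.Ico_add_one_right_eq_Icc, Finset.sum_Ico_eq_sum_range]
  simp [add_comm]

lemma sq_sum_formula (n : ℕ) :
    ∑ i ∈ range n, ((i:ℚ)+1)^2 = (n:ℚ) * ((n:ℚ)+1) * (2*(n:ℚ)+1) / 6 := by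
  induction n with
  | zero => simp
  | succ m ih =>
    rw [Finset.sum_range_succ, ih]
    push_cast
    ring

/-- the inverse modulo p -/
noncomputable def sig (p k : ℕ) : ℕ := (((k : ZMod p))⁻¹).val

lemma sig_spec {k : ℕ} (hk : k ∈ Icc 1 (p-1)) :
    sig p k ∈ Icc 1 (p-1) ∧ sig p (sig p k) = k ∧
      padicNorm p ((k:ℚ) * (sig p k : ℚ) - 1) ≤ ((p:ℚ))⁻¹ := by
  haveI : NeZero p := ⟨hp.out.pos.ne'⟩
  have hp2 := hp.out.two_le
  simp only [mem_Icc] at hk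
  have hklt : k < p := by omega
  have hknd : ¬ p ∣ k := not_dvd_of_lt (by omega) hklt
  have hk0 : (k : ZMod p) ≠ 0 := fun h => hknd ((ZMod.natCast_eq_zero_iff k p).1 h)
  have hinv0 : ((k : ZMod p))⁻¹ ≠ 0 := inv_ne_zero hk0
  have hval0 : sig p k ≠ 0 := fun h => hinv0 ((ZMod.val_eq_zero _).1 h)
  have hvallt : sig p k < p := ZMod.val_lt _
  have hcast : ((sig p k : ℕ) : ZMod p) = ((k : ZMod p))⁻¹ := ZMod.natCast_rightInverse _
  refine ⟨by simp only [mem_Icc]; omega, ?_, ?_⟩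
  · show ((((sig p k : ℕ) : ZMod p))⁻¹).val = k
    rw [hcast, inv_inv, ZMod.val_cast_of_lt hklt]
  · have h1 : ((k * sig p k : ℕ) : ZMod p) = ((1:ℕ) : ZMod p) := by
      push_cast [hcast]
      rw [mul_inv_cancel₀ hk0]
    have h2 : (p:ℤ) ∣ ((k * sig p k : ℕ) : ℤ) - 1 := by
      have hmod := (ZMod.natCast_eq_natCast_iff _ _ _).1 h1
      have hdvd := (Nat.modEq_iff_dvd (n := p)).1 hmod
      exact dvd_sub_comm.1 (by exact_mod_cast hdvd)
    have h3 : padicNorm p (((k * sig p k : ℕ) : ℤ) - 1 : ℤ) ≤ (p:ℚ)^(-(1:ℕ):ℤ) := by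
      rw [← padicNorm.dvd_iff_norm_le]
      simpa using h2
    have h4 : (((k * sig p k : ℕ) : ℤ) - 1 : ℤ) = ((k:ℚ) * (sig p k : ℚ) - 1 : ℚ) := by
      push_cast; ring
    rw [h4] at h3
    simpa using h3

lemma pn_six (hp3 : 3 < p) : ¬ p ∣ 6 := by
  intro h
  have h6 := Nat.le_of_dvd (by norm_num) h
  have hprime := hp.out
  interval_cases p <;> revert h hprime <;> decide

lemma pn_Q (hp3 : 3 < p) :
    padicNorm p (∑ k ∈ Icc 1 (p-1), ((k:ℚ)^2)⁻¹) ≤ ((p:ℚ))⁻¹ := by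
  set u : ℚ := ((p:ℚ))⁻¹ with hu
  have hppos : (0:ℚ) < p := by positivity
  have hu0 : 0 ≤ u := by positivity
  have hnormp : padicNorm p (p:ℚ) = u := padicNorm.padicNorm_p_of_prime
  have hsplit : ∀ k ∈ Icc 1 (p-1), ((k:ℚ)^2)⁻¹
      = ((sig p k : ℚ))^2 + (((k:ℚ)^2)⁻¹ - ((sig p k : ℚ))^2) := fun k _ => by ring
  rw [Finset.sum_congr rfl hsplit, Finset.sum_add_distrib]
  have hpart1 : padicNorm p (∑ k ∈ Icc 1 (p-1), ((sig p k : ℚ))^2) ≤ u := by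
    have hbij : ∑ k ∈ Icc 1 (p-1), ((sig p k : ℚ))^2 = ∑ k ∈ Icc 1 (p-1), ((k:ℚ))^2 := by
      refine Finset.sum_nbij' (i := sig p) (j := sig p) ?_ ?_ ?_ ?_ ?_
      · exact fun k hk => (sig_spec hk).1
      · exact fun k hk => (sig_spec hk).1
      · exact fun k hk => (sig_spec hk).2.1
      · exact fun k hk => (sig_spec hk).2.1
      · exact fun k hk => rfl
    rw [hbij, sum_Icc_one']
    have hval : ∑ i ∈ range (p-1), (((i:ℕ)+1 : ℚ))^2
        = (p:ℚ) * ((((p:ℚ)-1) * (2*(p:ℚ)-1)) / 6) := by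
      have := sq_sum_formula (p-1)
      have hc : (((p-1 : ℕ)) : ℚ) = (p:ℚ) - 1 := by
        have : 1 ≤ p := by omega
        push_cast [Nat.cast_sub this]
        ring
      rw [hc] at this
      rw [this]
      ring
    have goal2 : padicNorm p ((p:ℚ) * ((((p:ℚ)-1) * (2*(p:ℚ)-1)) / 6)) ≤ u := by
      rw [padicNorm.mul, hnormp]
      have hw : padicNorm p ((((p:ℚ)-1) * (2*(p:ℚ)-1)) / 6) ≤ 1 := by
        have hc2 : ((((p-1) * (2*p-1) : ℕ)) : ℚ) = ((p:ℚ)-1) * (2*(p:ℚ)-1) := by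
          have h1 : 1 ≤ p := by omega
          have h2 : 1 ≤ 2*p := by omega
          push_cast [Nat.cast_sub h1, Nat.cast_sub h2]
          ring
        have h6 : (((6:ℕ)):ℚ) = (6:ℚ) := by norm_num
        rw [padicNorm.div, ← hc2, ← h6, pn_nat_one (pn_six hp3)]
        have := padicNorm.of_nat (p := p) ((p-1) * (2*p-1))
        calc padicNorm p (((p-1) * (2*p-1) : ℕ) : ℚ) / 1 = padicNorm p (((p-1) * (2*p-1) : ℕ) : ℚ) := by ring
          _ ≤ 1 := this
      calc u * padicNorm p ((((p:ℚ)-1) * (2*(p:ℚ)-1)) / 6) ≤ u * 1 :=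
            mul_le_mul_of_nonneg_left hw hu0
        _ = u := mul_one u
    have hcast : ∑ i ∈ range (p-1), (((i+1:ℕ)):ℚ)^2 = ∑ i ∈ range (p-1), (((i:ℕ):ℚ)+1)^2 := by
      push_cast
      rfl
    rw [hcast, hval]
    exact goal2
  have hpart2 : padicNorm p (∑ k ∈ Icc 1 (p-1), (((k:ℚ)^2)⁻¹ - ((sig p k : ℚ))^2)) ≤ u := by
    refine padicNorm.sum_le' (fun k hk => ?_) hu0
    obtain ⟨hmem, -, hcong⟩ := sig_spec (p := p) hk
    simp only [mem_Icc] at hk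
    have hk0 : ((k:ℚ)) ≠ 0 := Nat.cast_ne_zero.mpr (by omega)
    have hknd : ¬ p ∣ k := not_dvd_of_lt (by omega) (by have := hp.out.two_le; omega)
    have hident : ((k:ℚ)^2)⁻¹ - ((sig p k : ℚ))^2
        = ((1 - (k:ℚ) * (sig p k : ℚ)) * ((k:ℚ))⁻¹) * (((k:ℚ))⁻¹ + (sig p k : ℚ)) := by
      field_simp
      ring
    rw [hident, padicNorm.mul, padicNorm.mul]
    have n1 : padicNorm p (1 - (k:ℚ) * (sig p k : ℚ)) ≤ u := by
      rw [show (1 - (k:ℚ) * (sig p k : ℚ)) = -((k:ℚ) * (sig p k : ℚ) - 1) by ring, padicNorm.neg]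
      exact hcong
    have n2 : padicNorm p (((k:ℚ))⁻¹) ≤ 1 := pn_inv_nat_le hknd
    have n3 : padicNorm p (((k:ℚ))⁻¹ + (sig p k : ℚ)) ≤ 1 :=
      le_trans padicNorm.nonarchimedean (max_le n2 (padicNorm.of_nat _))
    calc padicNorm p (1 - (k:ℚ) * (sig p k : ℚ)) * padicNorm p (((k:ℚ))⁻¹)
            * padicNorm p (((k:ℚ))⁻¹ + (sig p k : ℚ))
        ≤ (u * 1) * 1 := by
          refine mul_le_mul (mul_le_mul n1 n2 (padicNorm.nonneg _) hu0) n3 (padicNorm.nonneg _) ?_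
          positivity
      _ = u := by ring
  exact le_trans padicNorm.nonarchimedean (max_le hpart1 hpart2)

lemma pn_inv_sq_le {k : ℕ} (h : ¬ p ∣ k) : padicNorm p (((k:ℚ)^2)⁻¹) ≤ 1 := by
  have h2 : ¬ p ∣ k^2 := fun hd => h (hp.out.dvd_of_dvd_pow hd)
  have hc : ((k:ℚ))^2 = ((k^2 : ℕ) : ℚ) := by push_cast; ring
  rw [hc]
  exact pn_inv_nat_le h2

lemma harmonic_eq_Icc (n : ℕ) : harmonic n = ∑ k ∈ Icc 1 n, ((k:ℚ))⁻¹ := by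
  rw [sum_Icc_one']
  rfl

lemma wolstenholme (hp3 : 3 < p) : padicNorm p (harmonic (p-1)) ≤ ((p:ℚ))⁻¹^2 := by
  set u : ℚ := ((p:ℚ))⁻¹ with hu
  have hu0 : 0 ≤ u := by positivity
  have hnormp : padicNorm p (p:ℚ) = u := padicNorm.padicNorm_p_of_prime
  have hp2 := hp.out.two_le
  have hH : harmonic (p-1) = ∑ k ∈ Icc 1 (p-1), ((k:ℚ))⁻¹ := harmonic_eq_Icc _
  have hrefl : ∑ k ∈ Icc 1 (p-1), ((k:ℚ))⁻¹ = ∑ k ∈ Icc 1 (p-1), (((p-k : ℕ)):ℚ)⁻¹ := by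
    refine Finset.sum_nbij' (i := fun k => p - k) (j := fun k => p - k) ?_ ?_ ?_ ?_ ?_
    · intro k hk; simp only [mem_Icc] at *; omega
    · intro k hk; simp only [mem_Icc] at *; omega
    · intro k hk; simp only [mem_Icc] at hk; omega
    · intro k hk; simp only [mem_Icc] at hk; omega
    · intro k hk
      simp only [mem_Icc] at hk
      congr 2
      omega
  have hterm : ∀ k ∈ Icc 1 (p-1), ((k:ℚ))⁻¹ + (((p-k : ℕ)):ℚ)⁻¹
      = (p:ℚ) * (((k:ℚ))⁻¹ * (((p-k : ℕ)):ℚ)⁻¹) := by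
    intro k hk
    simp only [mem_Icc] at hk
    have hc : (((p-k : ℕ)):ℚ) = (p:ℚ) - k := by
      have : k ≤ p := by omega
      push_cast [Nat.cast_sub this]
      ring
    have hk0 : ((k:ℚ)) ≠ 0 := Nat.cast_ne_zero.mpr (by omega)
    have hpk0 : (p:ℚ) - (k:ℚ) ≠ 0 := by
      rw [← hc]
      exact Nat.cast_ne_zero.mpr (by omega)
    rw [hc]
    field_simp
    ring
  have h2H : 2 * harmonic (p-1)
      = (p:ℚ) * ∑ k ∈ Icc 1 (p-1), (((k:ℚ))⁻¹ * (((p-k : ℕ)):ℚ)⁻¹) := by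
    rw [hH, two_mul]
    nth_rewrite 2 [hrefl]
    rw [← Finset.sum_add_distrib, Finset.mul_sum]
    exact Finset.sum_congr rfl hterm
  have hterm2 : ∀ k ∈ Icc 1 (p-1), ((k:ℚ))⁻¹ * (((p-k : ℕ)):ℚ)⁻¹
      = -(((k:ℚ)^2)⁻¹) + (p:ℚ) * (((k:ℚ)^2)⁻¹ * (((p-k : ℕ)):ℚ)⁻¹) := by
    intro k hk
    simp only [mem_Icc] at hk
    have hc : (((p-k : ℕ)):ℚ) = (p:ℚ) - k := by
      have : k ≤ p := by omega
      push_cast [Nat.cast_sub this]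
      ring
    have hk0 : ((k:ℚ)) ≠ 0 := Nat.cast_ne_zero.mpr (by omega)
    have hpk0 : (p:ℚ) - (k:ℚ) ≠ 0 := by
      rw [← hc]
      exact Nat.cast_ne_zero.mpr (by omega)
    rw [hc]
    field_simp
    ring
  have hS : padicNorm p (∑ k ∈ Icc 1 (p-1), (((k:ℚ))⁻¹ * (((p-k : ℕ)):ℚ)⁻¹)) ≤ u := by
    rw [Finset.sum_congr rfl hterm2, Finset.sum_add_distrib, Finset.sum_neg_distrib,
      ← Finset.mul_sum]
    refine le_trans padicNorm.nonarchimedean (max_le ?_ ?_)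
    · rw [padicNorm.neg]
      exact pn_Q hp3
    · rw [padicNorm.mul, hnormp]
      have hR : padicNorm p (∑ k ∈ Icc 1 (p-1), (((k:ℚ)^2)⁻¹ * (((p-k : ℕ)):ℚ)⁻¹)) ≤ 1 := by
        refine padicNorm.sum_le' (fun k hk => ?_) (by norm_num)
        simp only [mem_Icc] at hk
        rw [padicNorm.mul]
        have n1 : padicNorm p (((k:ℚ)^2)⁻¹) ≤ 1 :=
          pn_inv_sq_le (not_dvd_of_lt (by omega) (by omega))
        have n2 : padicNorm p ((((p-k : ℕ)):ℚ)⁻¹) ≤ 1 :=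
          pn_inv_nat_le (not_dvd_of_lt (by omega) (by omega))
        calc padicNorm p (((k:ℚ)^2)⁻¹) * padicNorm p ((((p-k : ℕ)):ℚ)⁻¹) ≤ 1 * 1 :=
              mul_le_mul n1 n2 (padicNorm.nonneg _) (by norm_num)
          _ = 1 := by norm_num
      calc u * padicNorm p (∑ k ∈ Icc 1 (p-1), (((k:ℚ)^2)⁻¹ * (((p-k : ℕ)):ℚ)⁻¹)) ≤ u * 1 :=
            mul_le_mul_of_nonneg_left hR hu0
        _ = u := mul_one u
      
  have h2 : padicNorm p (2 * harmonic (p-1)) = padicNorm p (harmonic (p-1)) := by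
    rw [padicNorm.mul]
    have : padicNorm p (2:ℚ) = 1 := by
      have : ((2:ℕ):ℚ) = (2:ℚ) := by norm_num
      rw [← this]
      exact pn_nat_one (not_dvd_of_lt (by omega) (by omega))
    rw [this, one_mul]
  calc padicNorm p (harmonic (p-1)) = padicNorm p (2 * harmonic (p-1)) := h2.symm
    _ = padicNorm p ((p:ℚ) * ∑ k ∈ Icc 1 (p-1), (((k:ℚ))⁻¹ * (((p-k : ℕ)):ℚ)⁻¹)) := by rw [h2H]
    _ = u * padicNorm p (∑ k ∈ Icc 1 (p-1), (((k:ℚ))⁻¹ * (((p-k : ℕ)):ℚ)⁻¹)) := by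
        rw [padicNorm.mul, hnormp]
    _ ≤ u * u := mul_le_mul_of_nonneg_left hS hu0
    _ = u^2 := (sq u).symm


lemma den_not_dvd {r : ℚ} (h : padicNorm p r ≤ 1) : ¬ p ∣ r.den := by
  intro hdvd
  have hp1 := hp.out.one_lt
  have hr0 : r ≠ 0 := by
    rintro rfl
    rw [Rat.den_zero] at hdvd
    exact absurd (Nat.le_of_dvd one_pos hdvd) (by omega)
  have hnum : ¬ (p:ℤ) ∣ r.num := by
    intro hd
    have h1 : p ∣ r.num.natAbs := Int.natCast_dvd_natCast.1 (Int.dvd_natAbs.2 hd)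
    have h2 : p ∣ Nat.gcd r.num.natAbs r.den := Nat.dvd_gcd h1 hdvd
    rw [r.reduced] at h2
    exact absurd (Nat.le_of_dvd one_pos h2) (by omega)
  have hnum0 : padicValInt p r.num = 0 := padicValInt.eq_zero_of_not_dvd hnum
  have hden1 : 1 ≤ padicValNat p r.den := one_le_padicValNat_of_dvd r.den_nz hdvd
  have hv : padicValRat p r ≤ -1 := by
    rw [padicValRat, hnum0]
    omega
  have hnorm : padicNorm p r = (p:ℚ) ^ (-padicValRat p r) := by
    rw [padicNorm]
    simp [hr0]
  have hge : (p:ℚ) ^ (1:ℤ) ≤ (p:ℚ) ^ (-padicValRat p r) :=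
    zpow_le_zpow_right₀ (by exact_mod_cast hp1.le) (by omega)
  rw [← hnorm] at hge
  have ha : (p:ℚ) ≤ 1 := by
    calc (p:ℚ) = (p:ℚ)^(1:ℤ) := (zpow_one _).symm
      _ ≤ padicNorm p r := hge
      _ ≤ 1 := h
  have hb : (1:ℚ) < (p:ℚ) := by exact_mod_cast hp1
  exact absurd (lt_of_lt_of_le hb ha) (lt_irrefl _)


end Aux

section Main
variable {p : ℕ} [hp : Fact p.Prime]

lemma pn_g {k : ℕ} (hp3 : 3 < p) (hk0 : k ≠ 0) (hklt : k < p) :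
    padicNorm p (((k:ℚ) * 2^k)⁻¹) ≤ 1 := by
  have hc : ((k:ℚ) * 2^k) = ((k * 2^k : ℕ) : ℚ) := by push_cast; ring
  rw [hc]
  refine pn_inv_nat_le fun hd => ?_
  rcases (Nat.Prime.dvd_mul hp.out).1 hd with h | h
  · exact not_dvd_of_lt hk0 hklt h
  · have := hp.out.dvd_of_dvd_pow h
    have := Nat.le_of_dvd (by norm_num) this
    omega

/-- the key exact identity: `∑ (1 - cc p k)/(k 2^k) = H_{p-1}` -/
lemma key_ident (hp3 : 3 < p) :
    ∑ k ∈ Icc 1 (p-1), (1 - cc p k) * ((k:ℚ) * 2^k)⁻¹ = harmonic (p-1) := by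
  have hb := binom_ident (p-1) (-1/2)
  norm_num at hb
  -- convert hb to Icc form
  have h1 : ∑ k ∈ Icc 1 (p-1), ((p-1).choose k : ℚ) * (-1/2)^k / (k:ℚ)
      = ∑ k ∈ Icc 1 (p-1), ((1/2 : ℚ)^k - 1) / (k:ℚ) := by
    rw [sum_Icc_one', sum_Icc_one']
    push_cast
    convert hb using 2 with i
    norm_num
  -- termwise rewrite of LHS
  have h2 : ∀ k ∈ Icc 1 (p-1), ((p-1).choose k : ℚ) * (-1/2)^k / (k:ℚ)
      = cc p k * ((k:ℚ) * 2^k)⁻¹ := by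
    intro k hk
    simp only [mem_Icc] at hk
    have hk0 : ((k:ℚ)) ≠ 0 := Nat.cast_ne_zero.mpr (by omega)
    have h2k : ((2:ℚ))^k ≠ 0 := by positivity
    rw [show ((-1:ℚ)/2) = (-1)/2 from rfl, div_pow, cc]
    field_simp
  -- termwise rewrite of RHS
  have h3 : ∀ k ∈ Icc 1 (p-1), ((1/2 : ℚ)^k - 1) / (k:ℚ)
      = ((k:ℚ) * 2^k)⁻¹ - ((k:ℚ))⁻¹ := by
    intro k hk
    simp only [mem_Icc] at hk
    have hk0 : ((k:ℚ)) ≠ 0 := Nat.cast_ne_zero.mpr (by omega)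
    have h2k : ((2:ℚ))^k ≠ 0 := by positivity
    rw [div_pow]
    field_simp
    ring
  rw [Finset.sum_congr rfl h2, Finset.sum_congr rfl h3] at h1
  rw [Finset.sum_sub_distrib] at h1
  have h4 : ∑ k ∈ Icc 1 (p-1), ((k:ℚ))⁻¹ = harmonic (p-1) := (harmonic_eq_Icc _).symm
  rw [h4] at h1
  have h5 : ∀ k ∈ Icc 1 (p-1), (1 - cc p k) * ((k:ℚ) * 2^k)⁻¹
      = ((k:ℚ) * 2^k)⁻¹ - cc p k * ((k:ℚ) * 2^k)⁻¹ := fun k _ => by ring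
  rw [Finset.sum_congr rfl h5, Finset.sum_sub_distrib, h1]
  ring

theorem stmt2 (p : ℕ) (hp : p.Prime) (hp3 : 3 < p) :
    ratCong p 1 (∑ k ∈ Finset.Icc 1 (p - 1), harmonic k / (k * 2 ^ k)) 0 := by
  haveI hpf : Fact p.Prime := ⟨hp⟩
  set u : ℚ := ((p:ℚ))⁻¹ with hu
  have hppos : (0:ℚ) < p := by positivity
  have hp0 : ((p:ℚ)) ≠ 0 := ne_of_gt hppos
  have hu0 : 0 < u := by positivity
  have hnormp : padicNorm p (p:ℚ) = u := padicNorm.padicNorm_p_of_prime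
  have hnormu : padicNorm p u = u⁻¹ := by
    have h1 : padicNorm p u = 1 / padicNorm p (p:ℚ) := by
      rw [hu, ← one_div, padicNorm.div, padicNorm.one]
    rw [h1, hnormp, one_div]
  set A : ℚ := ∑ k ∈ Finset.Icc 1 (p - 1), harmonic k / (k * 2 ^ k) with hA
  -- decomposition
  have hdec : A = (∑ k ∈ Icc 1 (p-1), (harmonic k - (1 - cc p k) * u) * ((k:ℚ) * 2^k)⁻¹)
      + u * harmonic (p-1) := by
    rw [hA, ← key_ident hp3, Finset.mul_sum, ← Finset.sum_add_distrib]
    refine Finset.sum_congr rfl fun k hk => ?_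
    rw [div_eq_mul_inv]
    ring
  -- norm bound on the sum part
  have hns : padicNorm p (∑ k ∈ Icc 1 (p-1), (harmonic k - (1 - cc p k) * u) * ((k:ℚ) * 2^k)⁻¹)
      ≤ u := by
    refine padicNorm.sum_le' (fun k hk => ?_) hu0.le
    simp only [mem_Icc] at hk
    have hklt : k < p := by have := hp.two_le; omega
    have heq : harmonic k - (1 - cc p k) * u
        = ((p:ℚ) * harmonic k - 1 + cc p k) * u := by
      rw [hu]
      field_simp
      ring
    rw [padicNorm.mul, heq, padicNorm.mul, hnormu]
    have n1 : padicNorm p ((p:ℚ) * harmonic k - 1 + cc p k) ≤ u^2 := cc_cong (by omega)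
    have n2 : padicNorm p (((k:ℚ) * 2^k)⁻¹) ≤ 1 := pn_g hp3 (by omega) hklt
    calc padicNorm p ((p:ℚ) * harmonic k - 1 + cc p k) * u⁻¹ * padicNorm p (((k:ℚ) * 2^k)⁻¹)
        ≤ (u^2 * u⁻¹) * 1 := by
          refine mul_le_mul (mul_le_mul_of_nonneg_right n1 (by positivity)) n2
            (padicNorm.nonneg _) (by positivity)
      _ = u := by field_simp
  -- norm bound on u * H
  have hnw : padicNorm p (u * harmonic (p-1)) ≤ u := by
    rw [padicNorm.mul, hnormu]
    calc u⁻¹ * padicNorm p (harmonic (p-1)) ≤ u⁻¹ * u^2 :=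
          mul_le_mul_of_nonneg_left (wolstenholme hp3) (by positivity)
      _ = u := by field_simp
  have hnA : padicNorm p A ≤ u := by
    rw [hdec]
    exact le_trans padicNorm.nonarchimedean (max_le hns hnw)
  refine ⟨A / p, ?_, ?_⟩
  · field_simp; ring
  · refine den_not_dvd ?_
    rw [padicNorm.div, hnormp]
    rw [div_le_one hu0]
    exact hnA
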